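/- arXiv:2010.10643 — 4 statements merged into one kernel-verified Lean document; each statement's English description precedes it below -/
import Mathlib

section
/- The split sum is not associative: (*1 ∘ E) ∘ *1 ≡ *2, but *1 ∘ (E ∘ *1) ≡ *1. -/
/-- Finite impartial games, given by their (finite list of) options. -/
inductive IGame : Type where
  | mk : List IGame → IGame

/-- The empty game `E`, with no options. -/
abbrev E : IGame := .mk []

/-- The list of options of a game. -/
def IGame.opts : IGame → List IGame
  | .mk l => l

theorem IGame.sizeOf_lt_of_mem {g : IGame} {l : List IGame} (h : g ∈ l) :
    sizeOf g < sizeOf (IGame.mk l) := by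
  have := List.sizeOf_lt_of_mem h
  simp only [IGame.mk.sizeOf_spec]; omega

/-- The pass operator: `E* = E`; for `G` with options, `G*` has options
`G` together with `g*` for each option `g` of `G`. -/
def pass : IGame → IGame
  | .mk [] => .mk []
  | .mk l => .mk (.mk l :: l.attach.map fun g => pass g.1)
decreasing_by
  exact IGame.sizeOf_lt_of_mem g.2

/-- The split sum `G ∘ H`. -/
def split : IGame → IGame → IGame
  | .mk [], _ => .mk []
  | .mk gs, .mk [] => .mk gs
  | .mk gs, .mk hs =>
      .mk ((hs.attach.map fun h => split (.mk gs) h.1) ++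
           (gs.attach.map fun g => split g.1 (.mk hs)))
termination_by G H => sizeOf G + sizeOf H
decreasing_by
  · have := IGame.sizeOf_lt_of_mem h.2; omega
  · have := IGame.sizeOf_lt_of_mem g.2; omega

/-- Disjunctive sum of games. -/
def addG : IGame → IGame → IGame
  | .mk gs, .mk hs =>
      .mk ((gs.attach.map fun g => addG g.1 (.mk hs)) ++
           (hs.attach.map fun h => addG (.mk gs) h.1))
termination_by G H => sizeOf G + sizeOf H
decreasing_by
  · have := IGame.sizeOf_lt_of_mem g.2; omega
  · have := IGame.sizeOf_lt_of_mem h.2; omega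

/-- The nimber `*n`, with options `*0, …, *(n-1)`. -/
def star : ℕ → IGame
  | n => .mk ((List.range n).attach.map fun k => star k.1)
termination_by n => n
decreasing_by have := List.mem_range.mp k.2; omega

/-- `G` is a P-position (previous player wins under normal play):
every option is an N-position. -/
def PPos : IGame → Prop
  | .mk l => ∀ g ∈ l.attach, ¬ PPos g.1
decreasing_by exact IGame.sizeOf_lt_of_mem g.2

/-- Identity of game trees (extensionally: same set of options, recursively). -/
def Ident : IGame → IGame → Prop
  | .mk gs, .mk hs =>
      (∀ g ∈ gs.attach, ∃ h ∈ hs.attach, Ident g.1 h.1) ∧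
      (∀ h ∈ hs.attach, ∃ g ∈ gs.attach, Ident g.1 h.1)
termination_by G H => sizeOf G + sizeOf H
decreasing_by
  · have := IGame.sizeOf_lt_of_mem g.2
    have := IGame.sizeOf_lt_of_mem h.2; omega
  · have := IGame.sizeOf_lt_of_mem g.2
    have := IGame.sizeOf_lt_of_mem h.2; omega

set_option maxHeartbeats 1000000 in
private lemma star0' : _root_.star 0 = E := by rw [_root_.star]; rfl

set_option maxHeartbeats 1000000 in
private lemma star1' : _root_.star 1 = IGame.mk [E] := by
  rw [_root_.star]
  simp [List.range_succ, List.attach, List.attachWith, List.pmap, star0']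

set_option maxHeartbeats 1000000 in
private lemma star2' : _root_.star 2 = IGame.mk [E, IGame.mk [E]] := by
  rw [_root_.star]
  simp [List.range_succ, List.attach, List.attachWith, List.pmap, star0', star1']

set_option maxHeartbeats 1000000 in
private lemma split1E : split (IGame.mk [E]) E = IGame.mk [E] := by
  rw [split.eq_def]

set_option maxHeartbeats 1000000 in
private lemma splitE1 : split E (IGame.mk [E]) = E := split.eq_1 _

set_option maxHeartbeats 1000000 in
private lemma split11 : split (IGame.mk [E]) (IGame.mk [E]) = IGame.mk [IGame.mk [E], E] := by
  rw [split.eq_def]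
  simp [List.attach, List.attachWith, List.pmap, split1E, splitE1]

private lemma identEE : Ident E E := by rw [Ident.eq_def]; simp

set_option maxHeartbeats 1000000 in
private lemma ident11 : Ident (IGame.mk [E]) (IGame.mk [E]) := by
  rw [Ident.eq_def]
  simp [identEE]

set_option maxHeartbeats 1000000 in
private lemma not_ident1E : ¬ Ident (IGame.mk [E]) E := by
  rw [Ident.eq_def]
  simp

/-- the split sum is not associative:
`(*1 ∘ E) ∘ *1 ≡ *2` but `*1 ∘ (E ∘ *1) ≡ *1`. -/
theorem split_not_associative :
    Ident (split (split (star 1) E) (star 1)) (star 2) ∧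
    Ident (split (star 1) (split E (star 1))) (star 1) ∧
    ¬ Ident (split (split (star 1) E) (star 1)) (split (star 1) (split E (star 1))) := by
  refine ⟨?_, ?_, ?_⟩
  · rw [star1', split1E, split11, star2', Ident.eq_def]
    simp only [List.attach, List.attachWith, List.pmap, List.mem_cons, List.not_mem_nil]
    constructor
    · rintro g (rfl | rfl | h)
      · exact ⟨⟨IGame.mk [E], by simp⟩, by simp, ident11⟩
      · exact ⟨⟨E, by simp⟩, by simp, identEE⟩
      · simp at h
    · rintro h (rfl | rfl | h)
      · exact ⟨⟨E, by simp⟩, by simp, identEE⟩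
      · exact ⟨⟨IGame.mk [E], by simp⟩, by simp, ident11⟩
      · simp at h
  · rw [star1', splitE1, split1E]
    exact ident11
  · rw [star1', split1E, split11, splitE1, split1E, Ident.eq_1]
    rintro ⟨h1, -⟩
    obtain ⟨⟨h, hh⟩, -, hid⟩ := h1 ⟨IGame.mk [E], by simp⟩ (by simp)
    obtain rfl := List.mem_singleton.mp hh
    exact not_ident1E hid
end

section
/- If G and H are both P-positions (previous-player wins under normal play), then the split sum G ∘ H is also a P-position. -/
lemma ppos_iff (l : List IGame) : PPos (.mk l) ↔ ∀ g ∈ l, ¬ PPos g := by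
  rw [PPos]
  constructor
  · intro h g hg; exact h ⟨g, hg⟩ (List.mem_attach _ _)
  · intro h g _; exact h g.1 g.2

lemma ppos_E : PPos E := by rw [ppos_iff]; simp

lemma split_E_right (gs : List IGame) : split (.mk gs) E = .mk gs := by
  cases gs <;> rw [split] <;> simp

lemma split_E_left (H : IGame) : split E H = E := by rw [split]

lemma split_cons (g : IGame) (gs : List IGame) (h : IGame) (hs : List IGame) :
    split (.mk (g::gs)) (.mk (h::hs)) =
    .mk (((h::hs).attach.map fun x => split (.mk (g::gs)) x.1) ++
         ((g::gs).attach.map fun x => split x.1 (.mk (h::hs)))) := by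
  rw [split] <;> simp

lemma ppos_split_cons (g : IGame) (gs : List IGame) (h : IGame) (hs : List IGame) :
    PPos (split (.mk (g::gs)) (.mk (h::hs))) ↔
    (∀ x ∈ h::hs, ¬ PPos (split (.mk (g::gs)) x)) ∧
    (∀ x ∈ g::gs, ¬ PPos (split x (.mk (h::hs)))) := by
  rw [split_cons, ppos_iff]
  simp only [List.mem_append, List.mem_map, List.mem_attach, true_and, Subtype.exists,
    exists_prop]
  constructor
  · intro hyp
    refine ⟨fun x hx => hyp _ (Or.inl ⟨x, hx, rfl⟩), fun x hx => hyp _ (Or.inr ⟨x, hx, rfl⟩)⟩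
  · rintro ⟨h1, h2⟩ a (⟨x, hx, rfl⟩ | ⟨x, hx, rfl⟩)
    · exact h1 x hx
    · exact h2 x hx

lemma not_ppos_exists {l : List IGame} (h : ¬ PPos (.mk l)) : ∃ g ∈ l, PPos g := by
  rw [ppos_iff] at h; push_neg at h; exact h

lemma key : ∀ n (G H : IGame), sizeOf G + sizeOf H ≤ n →
    (PPos G → PPos H → PPos (split G H)) ∧
    (G ≠ E → PPos G → ¬PPos H → ¬PPos (split G H)) ∧
    (¬PPos G → PPos H → ¬PPos (split G H)) := by
  intro n
  induction n with
  | zero =>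
    intro G H hle
    obtain ⟨gs⟩ := G; obtain ⟨hs⟩ := H
    simp only [IGame.mk.sizeOf_spec] at hle
    omega
  | succ n IH =>
    intro G H hle
    obtain ⟨gs⟩ := G; obtain ⟨hs⟩ := H
    refine ⟨?_, ?_, ?_⟩
    · -- P ∘ P is P
      intro hG hH
      cases gs with
      | nil => rw [split_E_left]; exact ppos_E
      | cons g gs' =>
        cases hs with
        | nil => rw [split_E_right]; exact hG
        | cons h hs' =>
          rw [ppos_split_cons]
          constructor
          · intro x hx
            have hxN : ¬PPos x := (ppos_iff _).mp hH x hx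
            have hsz := IGame.sizeOf_lt_of_mem hx
            exact (IH (IGame.mk (g::gs')) x (by omega)).2.1 (by simp) hG hxN
          · intro x hx
            have hxN : ¬PPos x := (ppos_iff _).mp hG x hx
            have hsz := IGame.sizeOf_lt_of_mem hx
            exact (IH x (IGame.mk (h::hs')) (by omega)).2.2 hxN hH
    · -- P ∘ N is N
      intro hGne hG hH
      obtain ⟨w, hw, hwP⟩ := not_ppos_exists hH
      cases gs with
      | nil => exact absurd rfl hGne
      | cons g gs' =>
        cases hs with
        | nil => simp at hw
        | cons h hs' =>
          rw [ppos_split_cons]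
          rintro ⟨c1, c2⟩
          refine c1 w hw ?_
          have hsz := IGame.sizeOf_lt_of_mem hw
          obtain ⟨ws⟩ := w
          cases ws with
          | nil => rw [split_E_right]; exact hG
          | cons y ys => exact (IH _ _ (by omega)).1 hG hwP
    · -- N ∘ P is N
      intro hG hH
      cases hs with
      | nil => rw [split_E_right]; exact hG
      | cons h hs' =>
        obtain ⟨w, hw, hwP⟩ := not_ppos_exists hG
        cases gs with
        | nil => simp at hw
        | cons g gs' =>
          rw [ppos_split_cons]
          rintro ⟨c1, c2⟩
          refine c2 w hw ?_
          have hsz := IGame.sizeOf_lt_of_mem hw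
          obtain ⟨ws⟩ := w
          cases ws with
          | nil => rw [split_E_left]; exact ppos_E
          | cons y ys => exact (IH _ _ (by omega)).1 hwP hH


/-- if `G` and `H` are P-positions, so is `G ∘ H`. -/
theorem split_PPos_of_PPos (G H : IGame) (hG : PPos G) (hH : PPos H) :
    PPos (split G H) :=
  (key (sizeOf G + sizeOf H) G H le_rfl).1 hG hH
end

section
/- For a single pile of Nim with a pass: if n is odd, the Grundy value of (n)* is n + 1; if n is even and n > 0, the Grundy value of (n)* is n − 1; and the Grundy value of (0)* is 0. -/
lemma ppos_mk {l : List IGame} : PPos (.mk l) ↔ ∀ g ∈ l, ¬ PPos g := by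
  rw [PPos]; simp

lemma not_ppos {l : List IGame} {g : IGame} (hm : g ∈ l) (hp : PPos g) : ¬ PPos (.mk l) := by
  rw [ppos_mk]; push_neg; exact ⟨g, hm, hp⟩

lemma star_eq (n : ℕ) : _root_.star n = .mk ((List.range n).map _root_.star) := by
  rw [_root_.star]; simp [List.map_attach_eq_pmap]

lemma addG_opts (gs hs : List IGame) : addG (.mk gs) (.mk hs) =
    .mk (gs.map (fun g => addG g (.mk hs)) ++ hs.map (fun h => addG (.mk gs) h)) := by
  rw [addG]; simp [List.map_attach_eq_pmap]

lemma pass_cons (a : IGame) (l : List IGame) :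
    _root_.pass (.mk (a :: l)) = .mk (.mk (a :: l) :: (a :: l).map _root_.pass) := by
  rw [_root_.pass]
  · simp [List.map_pmap]
  · simp

lemma pass_star0 : _root_.pass (_root_.star 0) = .mk [] := by
  rw [star_eq]; simp; rw [_root_.pass]

lemma pass_star (n : ℕ) (h : 0 < n) :
    _root_.pass (_root_.star n) =
      .mk (_root_.star n :: (List.range n).map fun k => _root_.pass (_root_.star k)) := by
  cases n with
  | zero => omega
  | succ m =>
    conv_lhs => rw [star_eq (m+1), List.range_succ_eq_map, List.map_cons, pass_cons]
    rw [← List.map_cons, ← List.range_succ_eq_map, ← star_eq]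
    simp [List.map_map, Function.comp_def]

lemma addG_star (n m : ℕ) : addG (_root_.star n) (_root_.star m) =
    .mk (((List.range n).map fun k => addG (_root_.star k) (_root_.star m)) ++
         ((List.range m).map fun k => addG (_root_.star n) (_root_.star k))) := by
  conv_lhs => rw [star_eq n, star_eq m, addG_opts]
  simp only [List.map_map, Function.comp_def, ← star_eq]

lemma addG_pass_star0 (m : ℕ) : addG (_root_.pass (_root_.star 0)) (_root_.star m) =
    .mk ((List.range m).map fun k => addG (_root_.pass (_root_.star 0)) (_root_.star k)) := by
  conv_lhs => rw [pass_star0, star_eq m, addG_opts]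
  simp only [List.map_map, Function.comp_def, ← star_eq, ← pass_star0, List.map_nil,
    List.nil_append]

lemma addG_pass_star (n m : ℕ) (h : 0 < n) :
    addG (_root_.pass (_root_.star n)) (_root_.star m) =
    .mk (addG (_root_.star n) (_root_.star m) ::
         (((List.range n).map fun k => addG (_root_.pass (_root_.star k)) (_root_.star m)) ++
          ((List.range m).map fun k => addG (_root_.pass (_root_.star n)) (_root_.star k)))) := by
  conv_lhs => rw [pass_star n h, star_eq m, addG_opts]
  simp only [List.map_cons, List.map_map, Function.comp_def, List.cons_append,
    ← star_eq, ← pass_star n h]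

lemma nim (n : ℕ) : PPos (addG (_root_.star n) (_root_.star n)) := by
  induction n using Nat.strong_induction_on with
  | _ n ih =>
    rw [addG_star, ppos_mk]
    intro g hg
    simp only [List.mem_append, List.mem_map, List.mem_range] at hg
    obtain (⟨k, hk, rfl⟩ | ⟨k, hk, rfl⟩) := hg
    · rw [addG_star]
      refine not_ppos (g := addG (_root_.star k) (_root_.star k)) ?_ (ih k hk)
      simp only [List.mem_append, List.mem_map, List.mem_range]
      exact Or.inr ⟨k, hk, rfl⟩
    · rw [addG_star]
      refine not_ppos (g := addG (_root_.star k) (_root_.star k)) ?_ (ih k hk)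
      simp only [List.mem_append, List.mem_map, List.mem_range]
      exact Or.inl ⟨k, hk, rfl⟩

lemma nim_ne {a b : ℕ} (h : a ≠ b) : ¬ PPos (addG (_root_.star a) (_root_.star b)) := by
  rcases Nat.lt_or_ge a b with hab | hab
  · rw [addG_star]
    refine not_ppos (g := addG (_root_.star a) (_root_.star a)) ?_ (nim a)
    simp only [List.mem_append, List.mem_map, List.mem_range]
    exact Or.inr ⟨a, hab, rfl⟩
  · have hba : b < a := by omega
    rw [addG_star]
    refine not_ppos (g := addG (_root_.star b) (_root_.star b)) ?_ (nim b)
    simp only [List.mem_append, List.mem_map, List.mem_range]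
    exact Or.inl ⟨b, hba, rfl⟩

def fN (n : ℕ) : ℕ := if n % 2 = 1 then n + 1 else n - 1

lemma main (n : ℕ) : PPos (addG (_root_.pass (_root_.star n)) (_root_.star (fN n))) := by
  induction n using Nat.strong_induction_on with
  | _ n ih =>
    rcases Nat.eq_zero_or_pos n with rfl | hn
    · have : fN 0 = 0 := rfl
      rw [this, pass_star0, star_eq 0, addG_opts, ppos_mk]
      simp
    · set m := fN n with hm
      have hm' : m = if n % 2 = 1 then n + 1 else n - 1 := rfl
      have hmpos : 0 < m := by rw [hm']; split <;> omega
      rw [addG_pass_star n m hn, ppos_mk]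
      intro g hg
      simp only [List.mem_cons, List.mem_append, List.mem_map, List.mem_range] at hg
      obtain rfl | ⟨k, hk, rfl⟩ | ⟨j, hj, rfl⟩ := hg
      · refine nim_ne ?_
        rw [hm']; split <;> omega
      · -- option: addG (pass (star k)) (star m), k < n
        rcases lt_trichotomy (fN k) m with hlt | heq | hgt
        · -- respond in right pile
          have hpk := ih k hk
          rcases Nat.eq_zero_or_pos k with rfl | hk0
          · rw [addG_pass_star0]
            refine not_ppos (g := addG (_root_.pass (_root_.star 0)) (_root_.star (fN 0))) ?_ hpk
            simp only [List.mem_map, List.mem_range]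
            exact ⟨fN 0, hlt, rfl⟩
          · rw [addG_pass_star k m hk0]
            refine not_ppos (g := addG (_root_.pass (_root_.star k)) (_root_.star (fN k))) ?_ hpk
            simp only [List.mem_cons, List.mem_append, List.mem_map, List.mem_range]
            exact Or.inr (Or.inr ⟨fN k, hlt, rfl⟩)
        · -- impossible: fN injective
          exfalso
          have h1 : fN k = if k % 2 = 1 then k + 1 else k - 1 := rfl
          rw [hm'] at heq; rw [h1] at heq
          split at heq <;> split at heq <;> omega
        · -- fN k > m forces k = m, k odd, k > 0
          have h1 : fN k = if k % 2 = 1 then k + 1 else k - 1 := rfl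
          have hkm : k = m ∧ 0 < k := by
            rw [hm'] at hgt ⊢; rw [h1] at hgt
            split_ifs at hgt ⊢ <;> omega
          rw [addG_pass_star k m hkm.2]
          refine not_ppos (g := addG (_root_.star k) (_root_.star m)) (by simp) ?_
          rw [hkm.1]; exact nim m
      · -- option: addG (pass (star n)) (star j), j < m
        rcases eq_or_ne j n with hjq | hjn
        · rw [addG_pass_star n j hn]
          refine not_ppos (g := addG (_root_.star n) (_root_.star j)) (by simp) ?_
          rw [hjq]; exact nim n
        · obtain ⟨k, hkn, hkj⟩ : ∃ k, k < n ∧ fN k = j := by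
            refine ⟨if j % 2 = 1 then j + 1 else j - 1, ?_, ?_⟩
            · rw [hm'] at hj; split_ifs at hj ⊢ <;> omega
            · unfold fN; rw [hm'] at hj; split_ifs at hj ⊢ <;> omega
          rw [addG_pass_star n j hn]
          have := ih k hkn
          rw [hkj] at this
          refine not_ppos (g := addG (_root_.pass (_root_.star k)) (_root_.star j)) ?_ this
          simp only [List.mem_cons, List.mem_append, List.mem_map, List.mem_range]
          exact Or.inr (Or.inl ⟨k, hkn, rfl⟩)

/-- Grundy values of one-pile Nim with a pass: `(n)*` has Grundy
value `n+1` for odd `n`, `n-1` for even `n > 0`, and `(0)*` has Grundy value `0`. -/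
theorem grundy_one_pile_pass (n : ℕ) :
    (Odd n → PPos (addG (pass (star n)) (star (n + 1)))) ∧
    (Even n → 0 < n → PPos (addG (pass (star n)) (star (n - 1)))) ∧
    PPos (addG (pass (star 0)) (star 0)) := by
  refine ⟨?_, ?_, ?_⟩
  · intro h
    have h1 : fN n = n + 1 := by
      unfold fN; rw [Nat.odd_iff] at h; simp [h]
    have h2 := main n
    rwa [h1] at h2
  · intro h hpos
    have h1 : fN n = n - 1 := by
      unfold fN; rw [Nat.even_iff] at h; split <;> omega
    have h2 := main n
    rwa [h1] at h2
  · have h2 := main 0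
    have h1 : fN 0 = 0 := rfl
    rwa [h1] at h2
end

section
/- For odd natural numbers a, two-pile Nim with a pass (a, a+1)* is a P-position. -/
namespace TwoPilePassAux

lemma star_def (n : ℕ) : _root_.star n = .mk ((List.range n).map star) := by
  rw [star.eq_1, List.attach_map_val]

lemma addG_def (gs hs : List IGame) : addG (.mk gs) (.mk hs) =
    .mk (gs.map (fun g => addG g (.mk hs)) ++ hs.map (fun h => addG (.mk gs) h)) := by
  rw [addG.eq_1, List.attach_map_val (l := gs) (f := fun g => addG g (.mk hs)),
    List.attach_map_val (l := hs) (f := fun h => addG (.mk gs) h)]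

lemma pass_def (l : List IGame) (h : l ≠ []) :
    _root_.pass (.mk l) = .mk (.mk l :: l.map _root_.pass) := by
  rw [pass.eq_def]
  cases l with
  | nil => simp at h
  | cons a l => simp [List.attach_map_val]

lemma pass_E : _root_.pass E = E := by
  rw [pass.eq_def]

lemma PPos_iff (l : List IGame) : PPos (.mk l) ↔ ∀ g ∈ l, ¬ PPos g := by
  rw [PPos.eq_1]
  simp [List.mem_attach, Subtype.forall]

def N (m n : ℕ) : IGame := addG (_root_.star m) (_root_.star n)

lemma N_def (m n : ℕ) : N m n =
    .mk ((List.range m).map (fun k => N k n) ++ (List.range n).map (fun k => N m k)) := by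
  unfold N
  conv_lhs => rw [star_def m, star_def n, addG_def]
  rw [List.map_map, List.map_map, ← star_def m, ← star_def n]
  rfl

lemma PPos_N_iff : ∀ s m n, m + n ≤ s → (PPos (N m n) ↔ m = n) := by
  intro s
  induction s with
  | zero =>
    intro m n h
    have hm : m = 0 := by omega
    have hn : n = 0 := by omega
    subst hm; subst hn
    rw [N_def, PPos_iff]; simp
  | succ s ih =>
    intro m n h
    rw [N_def, PPos_iff]
    constructor
    · intro H
      by_contra hne
      rcases Nat.lt_or_ge m n with hlt | hge
      · exact H (N m m)
          (by simp only [List.mem_append, List.mem_map, List.mem_range]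
              exact Or.inr ⟨m, hlt, rfl⟩)
          ((ih m m (by omega)).mpr rfl)
      · have hlt : n < m := by omega
        exact H (N n n)
          (by simp only [List.mem_append, List.mem_map, List.mem_range]
              exact Or.inl ⟨n, hlt, rfl⟩)
          ((ih n n (by omega)).mpr rfl)
    · intro hmn g hg
      simp only [List.mem_append, List.mem_map, List.mem_range] at hg
      rcases hg with ⟨k, hk, rfl⟩ | ⟨k, hk, rfl⟩
      · rw [ih k n (by omega)]; omega
      · rw [ih m k (by omega)]; omega

def Q (m n : ℕ) : Prop :=
  (m = 0 ∧ n = 0) ∨ (m % 2 = 1 ∧ n = m + 1) ∨ (n % 2 = 1 ∧ m = n + 1)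

lemma Q_opt1 {m n k : ℕ} (hQ : Q m n) (hk : k < m) : ¬ Q k n := by
  simp only [Q] at *; omega

lemma Q_opt2 {m n k : ℕ} (hQ : Q m n) (hk : k < n) : ¬ Q m k := by
  simp only [Q] at *; omega

lemma Q_ne {m n : ℕ} (hQ : Q m n) (h : 0 < m + n) : m ≠ n := by
  simp only [Q] at *; omega

lemma Q_rev {m n : ℕ} (hne : m ≠ n) (h1 : ∀ k < m, ¬ Q k n) (h2 : ∀ k < n, ¬ Q m k) :
    Q m n := by
  simp only [Q] at *
  rcases Nat.lt_or_ge m n with h | h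
  · by_cases hp : m % 2 = 1
    · by_cases hn1 : n = m + 1
      · exact Or.inr (Or.inl ⟨hp, hn1⟩)
      · exact absurd (Or.inr (Or.inl ⟨hp, rfl⟩)) (h2 (m+1) (by omega))
    · by_cases hm0 : m = 0
      · exact absurd (Or.inl ⟨hm0, rfl⟩) (h2 0 (by omega))
      · exact absurd (Or.inr (Or.inr ⟨by omega, by omega⟩)) (h2 (m-1) (by omega))
  · have h' : n < m := by omega
    by_cases hp : n % 2 = 1
    · by_cases hm1 : m = n + 1
      · exact Or.inr (Or.inr ⟨hp, hm1⟩)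
      · exact absurd (Or.inr (Or.inr ⟨hp, rfl⟩)) (h1 (n+1) (by omega))
    · by_cases hn0 : n = 0
      · exact absurd (Or.inl ⟨rfl, hn0⟩) (h1 0 (by omega))
      · exact absurd (Or.inr (Or.inl ⟨by omega, by omega⟩)) (h1 (n-1) (by omega))

lemma base00 : PPos (pass (N 0 0)) := by
  have h : N 0 0 = E := by rw [N_def]; simp
  rw [h, pass_E, PPos_iff]; simp

lemma PPos_pass_N_iff : ∀ s m n, m + n ≤ s → (PPos (pass (N m n)) ↔ Q m n) := by
  intro s
  induction s with
  | zero =>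
    intro m n h
    have hm : m = 0 := by omega
    have hn : n = 0 := by omega
    subst hm; subst hn
    simp only [base00, true_iff]
    exact Or.inl ⟨rfl, rfl⟩
  | succ s ih =>
    intro m n hs
    rcases Nat.eq_zero_or_pos (m + n) with h0 | hpos
    · have hm : m = 0 := by omega
      have hn : n = 0 := by omega
      subst hm; subst hn
      simp only [base00, true_iff]
      exact Or.inl ⟨rfl, rfl⟩
    · set l := (List.range m).map (fun k => N k n) ++ (List.range n).map (fun k => N m k)
        with hl
      have hNl : N m n = .mk l := N_def m n
      have hne : l ≠ [] := by
        rw [hl]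
        simp only [ne_eq, List.append_eq_nil_iff, List.map_eq_nil_iff, List.range_eq_nil]
        omega
      rw [hNl, pass_def _ hne, PPos_iff]
      constructor
      · intro H
        have h1 : ¬ PPos (.mk l) := H _ List.mem_cons_self
        rw [← hNl, PPos_N_iff (m + n) m n le_rfl] at h1
        have h2 : ∀ k < m, ¬ Q k n := by
          intro k hk
          have hmem : pass (N k n) ∈ IGame.mk l :: l.map pass := by
            apply List.mem_cons_of_mem
            apply List.mem_map_of_mem
            rw [hl]
            simp only [List.mem_append, List.mem_map, List.mem_range]
            exact Or.inl ⟨k, hk, rfl⟩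
          have := H _ hmem
          rwa [ih k n (by omega)] at this
        have h3 : ∀ k < n, ¬ Q m k := by
          intro k hk
          have hmem : pass (N m k) ∈ IGame.mk l :: l.map pass := by
            apply List.mem_cons_of_mem
            apply List.mem_map_of_mem
            rw [hl]
            simp only [List.mem_append, List.mem_map, List.mem_range]
            exact Or.inr ⟨k, hk, rfl⟩
          have := H _ hmem
          rwa [ih m k (by omega)] at this
        exact Q_rev h1 h2 h3
      · intro hQ g hg
        rcases List.mem_cons.mp hg with rfl | hg'
        · rw [← hNl, PPos_N_iff (m + n) m n le_rfl]
          exact Q_ne hQ hpos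
        · obtain ⟨g0, hg0, rfl⟩ := List.mem_map.mp hg'
          rw [hl] at hg0
          simp only [List.mem_append, List.mem_map, List.mem_range] at hg0
          rcases hg0 with ⟨k, hk, rfl⟩ | ⟨k, hk, rfl⟩
          · rw [ih k n (by omega)]
            exact Q_opt1 hQ hk
          · rw [ih m k (by omega)]
            exact Q_opt2 hQ hk

end TwoPilePassAux

/-- for odd `a`, two-pile Nim with a pass `(a, a+1)*` is a
P-position. -/
theorem two_pile_pass_PPos (a : ℕ) (ha : Odd a) :
    PPos (pass (addG (star a) (star (a + 1)))) := by
  have h : addG (star a) (star (a + 1)) = TwoPilePassAux.N a (a + 1) := rfl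
  rw [h, TwoPilePassAux.PPos_pass_N_iff (a + (a + 1)) a (a + 1) le_rfl]
  obtain ⟨k, rfl⟩ := ha
  exact Or.inr (Or.inl ⟨by omega, rfl⟩)
end
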